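/- Let G be a non-degenerate PCR over a PCS Σ. The map χ sending a PCR morphism f : G → 2 (where 2 is the trivial PCR on {0,1}) to f⁻¹(1) is a bijection between the set of PCR morphisms from G to 2 and the set G° of maximal G-coherent subsets of Σ. -/
import Mathlib


universe u v

structure PCS (α : Type*) where
  star : α → α
  zero : α
  star_star : ∀ a, star (star a) = a
  star_ne_self : ∀ a, star a ≠ a

variable {α : Type*}

/-- A pointed complemented relation (PCR) over the PCS `P`. -/
def IsPCR (P : PCS α) (G : Set (α × α)) : Prop :=
  (∀ a, (P.zero, a) ∈ G) ∧ ∀ a b, (a, b) ∈ G ↔ (P.star b, P.star a) ∈ G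

/-- `a ≤_G b`: the reflexive-transitive closure of the relation `G`. -/
def pcrLe (G : Set (α × α)) (a b : α) : Prop :=
  Relation.ReflTransGen (fun x y => (x, y) ∈ G) a b

/-- A set `S` is `G`-coherent if no `a, b ∈ S` satisfy `a ≤_G b*`. -/
def Coherent (P : PCS α) (G : Set (α × α)) (S : Set α) : Prop :=
  ∀ a ∈ S, ∀ b ∈ S, ¬ pcrLe G a (P.star b)

/-- Forward closure `↑S = {b | ∃ a ∈ S, a ≤_G b}`. -/
def upClosure (G : Set (α × α)) (S : Set α) : Set α :=
  {b | ∃ a ∈ S, pcrLe G a b}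

/-- Maximal `G`-coherent subsets; the members of the dual space `G°`. -/
def MaxCoherent (P : PCS α) (G : Set (α × α)) (S : Set α) : Prop :=
  Coherent P G S ∧ ∀ T, Coherent P G T → S ⊆ T → S = T

/-- `G` is non-degenerate: no `a` satisfies both `a ≤_G a*` and `a* ≤_G a`. -/
def Nondegenerate (P : PCS α) (G : Set (α × α)) : Prop :=
  ∀ a, ¬ (pcrLe G a (P.star a) ∧ pcrLe G (P.star a) a)

/-- A complete `*`-selection: exactly one of `a`, `a*` belongs to `S`, for each `a`. -/
def CompleteSel (P : PCS α) (S : Set α) : Prop :=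
  ∀ a, Xor' (a ∈ S) (P.star a ∈ S)

/-- The half-space `⟨S;G⟩ = {u ∈ G° : S ⊆ u}`. -/
def halfspace (P : PCS α) (G : Set (α × α)) (S : Set α) : Set (Set α) :=
  {u | MaxCoherent P G u ∧ S ⊆ u}

/-- Coherent projection `coh_G(T) = ↑T ∖ (↑T)*`. -/
def cohProj (P : PCS α) (G : Set (α × α)) (T : Set α) : Set α :=
  upClosure G T \ (P.star '' upClosure G T)

/-- Morphisms of PCRs. -/
def IsPCRHom {β : Type*} (P : PCS α) (Q : PCS β) (G : Set (α × α)) (H : Set (β × β))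
    (f : α → β) : Prop :=
  f P.zero = Q.zero ∧ (∀ a, f (P.star a) = Q.star (f a)) ∧
    ∀ a b, (a, b) ∈ G → pcrLe H (f a) (f b)

/-- A poc set: a PCR whose induced relation `≤_G` is antisymmetric and whose only
negligible element is `0`. -/
def IsPocSet (P : PCS α) (G : Set (α × α)) : Prop :=
  IsPCR P G ∧ (∀ a b, pcrLe G a b → pcrLe G b a → a = b) ∧
    ∀ a, pcrLe G a (P.star a) → a = P.zero

/-- The two-element PCS on `Bool`, with `0 = false` and `* = not`. -/
def boolPCS : PCS Bool :=
  ⟨Bool.not, false, by decide, by decide⟩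

/-- The trivial PCR `2` over the two-element PCS. -/
def trivialPCR : Set (Bool × Bool) :=
  {p | p.1 = false ∨ p.2 = true}

lemma flip_le {P : PCS α} {G : Set (α × α)} (hG : IsPCR P G) {a b : α}
    (h : pcrLe G a b) : pcrLe G (P.star b) (P.star a) := by
  induction h with
  | refl => exact Relation.ReflTransGen.refl
  | tail _ hbc ih => exact Relation.ReflTransGen.head ((hG.2 _ _).mp hbc) ih

lemma triv_true {x y : Bool} (h : pcrLe trivialPCR x y) (hx : x = true) : y = true := by
  induction h with
  | refl => exact hx
  | tail _ hbc ih =>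
      rcases hbc with h' | h'
      · rw [ih] at h'; cases h'
      · exact h'

lemma not_both {P : PCS α} {G : Set (α × α)} {S : Set α} (hS : Coherent P G S) {a : α}
    (ha : a ∈ S) (ha' : P.star a ∈ S) : False := by
  have := hS a ha (P.star a) ha'
  rw [P.star_star] at this
  exact this Relation.ReflTransGen.refl

lemma ext_coherent {P : PCS α} {G : Set (α × α)} (hG : IsPCR P G) (hnd : Nondegenerate P G)
    {S : Set α} (hS : Coherent P G S) (a : α) :
    Coherent P G (insert a S) ∨ Coherent P G (insert (P.star a) S) := by
  by_contra h
  push_neg at h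
  obtain ⟨h1, h2⟩ := h
  unfold Coherent at h1 h2
  push_neg at h1 h2
  -- reduce h1
  have k1 : pcrLe G a (P.star a) ∨ ∃ s ∈ S, pcrLe G s (P.star a) := by
    obtain ⟨x, hx, y, hy, hxy⟩ := h1
    rcases hx with rfl | hx
    · rcases hy with rfl | hy
      · exact Or.inl hxy
      · refine Or.inr ⟨y, hy, ?_⟩
        have := flip_le hG hxy
        rwa [P.star_star] at this
    · rcases hy with rfl | hy
      · exact Or.inr ⟨x, hx, hxy⟩
      · exact absurd hxy (hS x hx y hy)
  have k2 : pcrLe G (P.star a) a ∨ ∃ s ∈ S, pcrLe G s a := by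
    obtain ⟨x, hx, y, hy, hxy⟩ := h2
    rcases hx with rfl | hx
    · rcases hy with rfl | hy
      · rw [P.star_star] at hxy; exact Or.inl hxy
      · refine Or.inr ⟨y, hy, ?_⟩
        have := flip_le hG hxy
        rwa [P.star_star, P.star_star] at this
    · rcases hy with rfl | hy
      · rw [P.star_star] at hxy; exact Or.inr ⟨x, hx, hxy⟩
      · exact absurd hxy (hS x hx y hy)
  rcases k1 with k1 | ⟨s, hs, k1⟩ <;> rcases k2 with k2 | ⟨t, ht, k2⟩
  · exact hnd a ⟨k1, k2⟩
  · -- pcrLe a a*, pcrLe t a : t ≤ a ≤ a* ≤ t*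
    have h3 : pcrLe G (P.star a) (P.star t) := flip_le hG k2
    exact hS t ht t ht (k2.trans (k1.trans h3))
  · -- pcrLe s a*, pcrLe a* a : s ≤ a* ≤ a and flip gives a* ≤ s*
    have h3 : pcrLe G (P.star (P.star a)) (P.star s) := flip_le hG k1
    rw [P.star_star] at h3
    exact hS s hs s hs (k1.trans (k2.trans h3))
  · -- pcrLe s a*, pcrLe t a : t ≤ a ≤ s*
    have h3 : pcrLe G (P.star (P.star a)) (P.star s) := flip_le hG k1
    rw [P.star_star] at h3
    exact hS t ht s hs (k2.trans h3)

lemma max_complete {P : PCS α} {G : Set (α × α)} (hG : IsPCR P G) (hnd : Nondegenerate P G)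
    {S : Set α} (hS : MaxCoherent P G S) {a : α} (ha : a ∉ S) : P.star a ∈ S := by
  by_contra ha'
  rcases ext_coherent hG hnd hS.1 a with hc | hc
  · have := hS.2 _ hc (Set.subset_insert _ _)
    exact ha (this ▸ Set.mem_insert a S)
  · have := hS.2 _ hc (Set.subset_insert _ _)
    exact ha' (this ▸ Set.mem_insert _ S)

/-- `f ↦ f⁻¹(1)` is a bijection between PCR morphisms `G → 2` and `G°`. -/
theorem stmt2 (P : PCS α) (G : Set (α × α)) (hG : IsPCR P G) (hnd : Nondegenerate P G) :
    Set.BijOn (fun f : α → Bool => f ⁻¹' {true})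
      {f | IsPCRHom P boolPCS G trivialPCR f} {S | MaxCoherent P G S} := by
  classical
  refine ⟨?_, ?_, ?_⟩
  · -- MapsTo
    rintro f ⟨hf0, hfstar, hfmono⟩
    set S : Set α := f ⁻¹' {true} with hSdef
    have hmemS : ∀ a, a ∈ S ↔ f a = true := fun a => Iff.rfl
    have hclosed : ∀ a b, a ∈ S → pcrLe G a b → b ∈ S := by
      intro a b ha hab
      have : pcrLe trivialPCR (f a) (f b) := by
        induction hab with
        | refl => exact Relation.ReflTransGen.refl
        | tail _ hbc ih => exact ih.trans (hfmono _ _ hbc)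
      exact (hmemS b).mpr (triv_true this ((hmemS a).mp ha))
    have hstarS : ∀ a, a ∈ S → P.star a ∉ S := by
      intro a ha ha'
      have h1 := (hmemS a).mp ha
      have h2 := (hmemS _).mp ha'
      rw [hfstar a, h1] at h2
      exact absurd h2 (by decide)
    have hcoh : Coherent P G S := by
      intro a ha b hb hab
      exact hstarS b hb (hclosed _ _ ha hab)
    refine ⟨hcoh, fun T hT hST => Set.Subset.antisymm hST fun t ht => ?_⟩
    by_contra hts
    have hft : f t = false := by
      cases h : f t
      · rfl
      · exact absurd ((hmemS t).mpr h) hts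
    have : P.star t ∈ S := by
      rw [hmemS, hfstar, hft]; rfl
    have := hT (P.star t) (hST this) t ht
    exact this Relation.ReflTransGen.refl
  · -- InjOn
    rintro f hf g hg hfg
    have h : ∀ a, (f a = true) ↔ (g a = true) := by
      intro a
      constructor
      · intro h; have : a ∈ f ⁻¹' {true} := h
        simp only at hfg; rw [hfg] at this; exact this
      · intro h; have : a ∈ g ⁻¹' {true} := h
        simp only at hfg; rw [← hfg] at this; exact this
    funext a
    cases hfa : f a <;> cases hga : g a <;> simp_all [h a]
  · -- SurjOn
    rintro S hS
    set f : α → Bool := fun a => if a ∈ S then true else false with hfdef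
    have hmemS : ∀ a, f a = true ↔ a ∈ S := by
      intro a; simp [hfdef]
    have hcomp : ∀ a, a ∉ S → P.star a ∈ S := fun a => max_complete hG hnd hS
    refine ⟨f, ⟨?_, ?_, ?_⟩, ?_⟩
    · -- f 0 = 0
      have h0 : P.zero ∉ S := by
        intro h0
        exact hS.1 _ h0 _ h0 (Relation.ReflTransGen.single (hG.1 _))
      simp [hfdef, h0]; rfl
    · -- star
      intro a
      by_cases ha : a ∈ S
      · have ha' : P.star a ∉ S := fun h => not_both hS.1 ha h
        simp [hfdef, ha, ha', boolPCS]
      · have ha' : P.star a ∈ S := hcomp a ha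
        simp [hfdef, ha, ha', boolPCS]
    · -- monotone
      intro a b hab
      by_cases ha : a ∈ S
      · have hb : b ∈ S := by
          by_contra hb
          have hb' : P.star b ∈ S := hcomp b hb
          have : pcrLe G a (P.star (P.star b)) := by
            rw [P.star_star]; exact Relation.ReflTransGen.single hab
          exact hS.1 a ha _ hb' this
        have : f a = f b := by rw [(hmemS a).mpr ha, (hmemS b).mpr hb]
        rw [this]; exact Relation.ReflTransGen.refl
      · have hfa : f a = false := by simp [hfdef, ha]
        exact Relation.ReflTransGen.single (Or.inl hfa)
    · -- preimage
      ext a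
      simp only [Set.mem_preimage, Set.mem_singleton_iff]
      exact hmemS a
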